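/- arXiv:2104.06938 — 3 statements merged into one kernel-verified Lean document; each statement's English description precedes it below -/
import Mathlib

section
/- For all b ∈ [0,1], the partial transpose of the Horodecki 3-qubit state σ^(b) with respect to the first qubit is positive semidefinite. -/
noncomputable section

open scoped BigOperators ComplexOrder

abbrev Q3 := Fin 2 × Fin 2 × Fin 2

/-- lexicographic encoding of the 3-qubit basis -/
def enc (x : Q3) : Fin 8 :=
  ⟨4 * x.1.val + 2 * x.2.1.val + x.2.2.val, by
    have h1 := x.1.isLt; have h2 := x.2.1.isLt; have h3 := x.2.2.isLt; omega⟩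

/-- the 8×8 matrix M of the Horodecki construction -/
noncomputable def Mmat (b : ℝ) : Matrix (Fin 8) (Fin 8) ℂ :=
  !![(b:ℂ), 0, 0, 0, 0, (b:ℂ), 0, 0;
     0, (b:ℂ), 0, 0, 0, 0, (b:ℂ), 0;
     0, 0, (b:ℂ), 0, 0, 0, 0, (b:ℂ);
     0, 0, 0, (b:ℂ), 0, 0, 0, 0;
     0, 0, 0, 0, (((1+b)/2 : ℝ) : ℂ), 0, 0, ((Real.sqrt (1-b^2)/2 : ℝ) : ℂ);
     (b:ℂ), 0, 0, 0, 0, (b:ℂ), 0, 0;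
     0, (b:ℂ), 0, 0, 0, 0, (b:ℂ), 0;
     0, 0, (b:ℂ), 0, ((Real.sqrt (1-b^2)/2 : ℝ) : ℂ), 0, 0, (((1+b)/2 : ℝ) : ℂ)]

/-- the Horodecki 3-qubit state σ^(b), as an 8×8 matrix -/
noncomputable def sigma8 (b : ℝ) : Matrix (Fin 8) (Fin 8) ℂ :=
  (((7*b+1 : ℝ) : ℂ))⁻¹ • Mmat b

/-- σ^(b) viewed as an operator on ℂ²⊗ℂ²⊗ℂ² -/
noncomputable def sigma (b : ℝ) : Matrix Q3 Q3 ℂ :=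
  Matrix.of fun x y => sigma8 b (enc x) (enc y)

/-- partial transpose with respect to the first qubit -/
def ptA (ρ : Matrix Q3 Q3 ℂ) : Matrix Q3 Q3 ℂ :=
  Matrix.of fun x y => ρ (y.1, x.2) (x.1, y.2)

/-- partial transpose with respect to the second qubit -/
def ptB (ρ : Matrix Q3 Q3 ℂ) : Matrix Q3 Q3 ℂ :=
  Matrix.of fun x y => ρ (x.1, y.2.1, x.2.2) (y.1, x.2.1, y.2.2)

/-- partial transpose with respect to the third qubit -/
def ptC (ρ : Matrix Q3 Q3 ℂ) : Matrix Q3 Q3 ℂ :=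
  Matrix.of fun x y => ρ (x.1, x.2.1, y.2.2) (y.1, y.2.1, x.2.2)

/-- cyclic relabeling of the three qubits (A→B, B→C, C→A on party roles) -/
def cyc (ρ : Matrix Q3 Q3 ℂ) : Matrix Q3 Q3 ℂ :=
  Matrix.of fun x y => ρ (x.2.1, x.2.2, x.1) (y.2.1, y.2.2, y.1)

/-- the party-symmetrized state η^(b) -/
noncomputable def etaState (b : ℝ) : Matrix Q3 Q3 ℂ :=
  (3 : ℂ)⁻¹ • (sigma b + cyc (sigma b) + cyc (cyc (sigma b)))

open Matrix
noncomputable def B8 (b : ℝ) : Matrix (Fin 8) (Fin 8) ℂ :=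
  !![((Real.sqrt b : ℝ):ℂ), 0, 0, 0, 0, 0, 0, 0;
     0, ((Real.sqrt b : ℝ):ℂ), 0, 0, ((Real.sqrt b : ℝ):ℂ), 0, 0, 0;
     0, 0, ((Real.sqrt b : ℝ):ℂ), 0, 0, ((Real.sqrt b : ℝ):ℂ), 0, 0;
     0, 0, 0, ((Real.sqrt b : ℝ):ℂ), 0, 0, ((Real.sqrt b : ℝ):ℂ), 0;
     0, 0, 0, 0, ((Real.sqrt ((1-b)/2) : ℝ):ℂ), 0, 0, ((Real.sqrt ((1+b)/2) : ℝ):ℂ);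
     0,0,0,0,0,0,0,0; 0,0,0,0,0,0,0,0; 0,0,0,0,0,0,0,0]

noncomputable def N8 (b : ℝ) : Matrix (Fin 8) (Fin 8) ℂ :=
  !![(b:ℂ), 0, 0, 0, 0, 0, 0, 0;
     0, (b:ℂ), 0, 0, (b:ℂ), 0, 0, 0;
     0, 0, (b:ℂ), 0, 0, (b:ℂ), 0, 0;
     0, 0, 0, (b:ℂ), 0, 0, (b:ℂ), 0;
     0, (b:ℂ), 0, 0, (((1+b)/2 : ℝ) : ℂ), 0, 0, ((Real.sqrt (1-b^2)/2 : ℝ) : ℂ);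
     0, 0, (b:ℂ), 0, 0, (b:ℂ), 0, 0;
     0, 0, 0, (b:ℂ), 0, 0, (b:ℂ), 0;
     0, 0, 0, 0, ((Real.sqrt (1-b^2)/2 : ℝ) : ℂ), 0, 0, (((1+b)/2 : ℝ) : ℂ)]

@[simp] lemma B8e_0_0 (b : ℝ) : B8 b 0 0 = ((Real.sqrt b : ℝ):ℂ) := rfl
@[simp] lemma B8e_0_1 (b : ℝ) : B8 b 0 1 = 0 := rfl
@[simp] lemma B8e_0_2 (b : ℝ) : B8 b 0 2 = 0 := rfl
@[simp] lemma B8e_0_3 (b : ℝ) : B8 b 0 3 = 0 := rfl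
@[simp] lemma B8e_0_4 (b : ℝ) : B8 b 0 4 = 0 := rfl
@[simp] lemma B8e_0_5 (b : ℝ) : B8 b 0 5 = 0 := rfl
@[simp] lemma B8e_0_6 (b : ℝ) : B8 b 0 6 = 0 := rfl
@[simp] lemma B8e_0_7 (b : ℝ) : B8 b 0 7 = 0 := rfl
@[simp] lemma B8e_1_0 (b : ℝ) : B8 b 1 0 = 0 := rfl
@[simp] lemma B8e_1_1 (b : ℝ) : B8 b 1 1 = ((Real.sqrt b : ℝ):ℂ) := rfl
@[simp] lemma B8e_1_2 (b : ℝ) : B8 b 1 2 = 0 := rfl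
@[simp] lemma B8e_1_3 (b : ℝ) : B8 b 1 3 = 0 := rfl
@[simp] lemma B8e_1_4 (b : ℝ) : B8 b 1 4 = ((Real.sqrt b : ℝ):ℂ) := rfl
@[simp] lemma B8e_1_5 (b : ℝ) : B8 b 1 5 = 0 := rfl
@[simp] lemma B8e_1_6 (b : ℝ) : B8 b 1 6 = 0 := rfl
@[simp] lemma B8e_1_7 (b : ℝ) : B8 b 1 7 = 0 := rfl
@[simp] lemma B8e_2_0 (b : ℝ) : B8 b 2 0 = 0 := rfl
@[simp] lemma B8e_2_1 (b : ℝ) : B8 b 2 1 = 0 := rfl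
@[simp] lemma B8e_2_2 (b : ℝ) : B8 b 2 2 = ((Real.sqrt b : ℝ):ℂ) := rfl
@[simp] lemma B8e_2_3 (b : ℝ) : B8 b 2 3 = 0 := rfl
@[simp] lemma B8e_2_4 (b : ℝ) : B8 b 2 4 = 0 := rfl
@[simp] lemma B8e_2_5 (b : ℝ) : B8 b 2 5 = ((Real.sqrt b : ℝ):ℂ) := rfl
@[simp] lemma B8e_2_6 (b : ℝ) : B8 b 2 6 = 0 := rfl
@[simp] lemma B8e_2_7 (b : ℝ) : B8 b 2 7 = 0 := rfl
@[simp] lemma B8e_3_0 (b : ℝ) : B8 b 3 0 = 0 := rfl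
@[simp] lemma B8e_3_1 (b : ℝ) : B8 b 3 1 = 0 := rfl
@[simp] lemma B8e_3_2 (b : ℝ) : B8 b 3 2 = 0 := rfl
@[simp] lemma B8e_3_3 (b : ℝ) : B8 b 3 3 = ((Real.sqrt b : ℝ):ℂ) := rfl
@[simp] lemma B8e_3_4 (b : ℝ) : B8 b 3 4 = 0 := rfl
@[simp] lemma B8e_3_5 (b : ℝ) : B8 b 3 5 = 0 := rfl
@[simp] lemma B8e_3_6 (b : ℝ) : B8 b 3 6 = ((Real.sqrt b : ℝ):ℂ) := rfl
@[simp] lemma B8e_3_7 (b : ℝ) : B8 b 3 7 = 0 := rfl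
@[simp] lemma B8e_4_0 (b : ℝ) : B8 b 4 0 = 0 := rfl
@[simp] lemma B8e_4_1 (b : ℝ) : B8 b 4 1 = 0 := rfl
@[simp] lemma B8e_4_2 (b : ℝ) : B8 b 4 2 = 0 := rfl
@[simp] lemma B8e_4_3 (b : ℝ) : B8 b 4 3 = 0 := rfl
@[simp] lemma B8e_4_4 (b : ℝ) : B8 b 4 4 = ((Real.sqrt ((1-b)/2) : ℝ):ℂ) := rfl
@[simp] lemma B8e_4_5 (b : ℝ) : B8 b 4 5 = 0 := rfl
@[simp] lemma B8e_4_6 (b : ℝ) : B8 b 4 6 = 0 := rfl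
@[simp] lemma B8e_4_7 (b : ℝ) : B8 b 4 7 = ((Real.sqrt ((1+b)/2) : ℝ):ℂ) := rfl
@[simp] lemma B8e_5_0 (b : ℝ) : B8 b 5 0 = 0 := rfl
@[simp] lemma B8e_5_1 (b : ℝ) : B8 b 5 1 = 0 := rfl
@[simp] lemma B8e_5_2 (b : ℝ) : B8 b 5 2 = 0 := rfl
@[simp] lemma B8e_5_3 (b : ℝ) : B8 b 5 3 = 0 := rfl
@[simp] lemma B8e_5_4 (b : ℝ) : B8 b 5 4 = 0 := rfl
@[simp] lemma B8e_5_5 (b : ℝ) : B8 b 5 5 = 0 := rfl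
@[simp] lemma B8e_5_6 (b : ℝ) : B8 b 5 6 = 0 := rfl
@[simp] lemma B8e_5_7 (b : ℝ) : B8 b 5 7 = 0 := rfl
@[simp] lemma B8e_6_0 (b : ℝ) : B8 b 6 0 = 0 := rfl
@[simp] lemma B8e_6_1 (b : ℝ) : B8 b 6 1 = 0 := rfl
@[simp] lemma B8e_6_2 (b : ℝ) : B8 b 6 2 = 0 := rfl
@[simp] lemma B8e_6_3 (b : ℝ) : B8 b 6 3 = 0 := rfl
@[simp] lemma B8e_6_4 (b : ℝ) : B8 b 6 4 = 0 := rfl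
@[simp] lemma B8e_6_5 (b : ℝ) : B8 b 6 5 = 0 := rfl
@[simp] lemma B8e_6_6 (b : ℝ) : B8 b 6 6 = 0 := rfl
@[simp] lemma B8e_6_7 (b : ℝ) : B8 b 6 7 = 0 := rfl
@[simp] lemma B8e_7_0 (b : ℝ) : B8 b 7 0 = 0 := rfl
@[simp] lemma B8e_7_1 (b : ℝ) : B8 b 7 1 = 0 := rfl
@[simp] lemma B8e_7_2 (b : ℝ) : B8 b 7 2 = 0 := rfl
@[simp] lemma B8e_7_3 (b : ℝ) : B8 b 7 3 = 0 := rfl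
@[simp] lemma B8e_7_4 (b : ℝ) : B8 b 7 4 = 0 := rfl
@[simp] lemma B8e_7_5 (b : ℝ) : B8 b 7 5 = 0 := rfl
@[simp] lemma B8e_7_6 (b : ℝ) : B8 b 7 6 = 0 := rfl
@[simp] lemma B8e_7_7 (b : ℝ) : B8 b 7 7 = 0 := rfl
@[simp] lemma N8e_0_0 (b : ℝ) : N8 b 0 0 = (b:ℂ) := rfl
@[simp] lemma N8e_0_1 (b : ℝ) : N8 b 0 1 = 0 := rfl
@[simp] lemma N8e_0_2 (b : ℝ) : N8 b 0 2 = 0 := rfl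
@[simp] lemma N8e_0_3 (b : ℝ) : N8 b 0 3 = 0 := rfl
@[simp] lemma N8e_0_4 (b : ℝ) : N8 b 0 4 = 0 := rfl
@[simp] lemma N8e_0_5 (b : ℝ) : N8 b 0 5 = 0 := rfl
@[simp] lemma N8e_0_6 (b : ℝ) : N8 b 0 6 = 0 := rfl
@[simp] lemma N8e_0_7 (b : ℝ) : N8 b 0 7 = 0 := rfl
@[simp] lemma N8e_1_0 (b : ℝ) : N8 b 1 0 = 0 := rfl
@[simp] lemma N8e_1_1 (b : ℝ) : N8 b 1 1 = (b:ℂ) := rfl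
@[simp] lemma N8e_1_2 (b : ℝ) : N8 b 1 2 = 0 := rfl
@[simp] lemma N8e_1_3 (b : ℝ) : N8 b 1 3 = 0 := rfl
@[simp] lemma N8e_1_4 (b : ℝ) : N8 b 1 4 = (b:ℂ) := rfl
@[simp] lemma N8e_1_5 (b : ℝ) : N8 b 1 5 = 0 := rfl
@[simp] lemma N8e_1_6 (b : ℝ) : N8 b 1 6 = 0 := rfl
@[simp] lemma N8e_1_7 (b : ℝ) : N8 b 1 7 = 0 := rfl
@[simp] lemma N8e_2_0 (b : ℝ) : N8 b 2 0 = 0 := rfl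
@[simp] lemma N8e_2_1 (b : ℝ) : N8 b 2 1 = 0 := rfl
@[simp] lemma N8e_2_2 (b : ℝ) : N8 b 2 2 = (b:ℂ) := rfl
@[simp] lemma N8e_2_3 (b : ℝ) : N8 b 2 3 = 0 := rfl
@[simp] lemma N8e_2_4 (b : ℝ) : N8 b 2 4 = 0 := rfl
@[simp] lemma N8e_2_5 (b : ℝ) : N8 b 2 5 = (b:ℂ) := rfl
@[simp] lemma N8e_2_6 (b : ℝ) : N8 b 2 6 = 0 := rfl
@[simp] lemma N8e_2_7 (b : ℝ) : N8 b 2 7 = 0 := rfl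
@[simp] lemma N8e_3_0 (b : ℝ) : N8 b 3 0 = 0 := rfl
@[simp] lemma N8e_3_1 (b : ℝ) : N8 b 3 1 = 0 := rfl
@[simp] lemma N8e_3_2 (b : ℝ) : N8 b 3 2 = 0 := rfl
@[simp] lemma N8e_3_3 (b : ℝ) : N8 b 3 3 = (b:ℂ) := rfl
@[simp] lemma N8e_3_4 (b : ℝ) : N8 b 3 4 = 0 := rfl
@[simp] lemma N8e_3_5 (b : ℝ) : N8 b 3 5 = 0 := rfl
@[simp] lemma N8e_3_6 (b : ℝ) : N8 b 3 6 = (b:ℂ) := rfl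
@[simp] lemma N8e_3_7 (b : ℝ) : N8 b 3 7 = 0 := rfl
@[simp] lemma N8e_4_0 (b : ℝ) : N8 b 4 0 = 0 := rfl
@[simp] lemma N8e_4_1 (b : ℝ) : N8 b 4 1 = (b:ℂ) := rfl
@[simp] lemma N8e_4_2 (b : ℝ) : N8 b 4 2 = 0 := rfl
@[simp] lemma N8e_4_3 (b : ℝ) : N8 b 4 3 = 0 := rfl
@[simp] lemma N8e_4_4 (b : ℝ) : N8 b 4 4 = (((1+b)/2 : ℝ) : ℂ) := rfl
@[simp] lemma N8e_4_5 (b : ℝ) : N8 b 4 5 = 0 := rfl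
@[simp] lemma N8e_4_6 (b : ℝ) : N8 b 4 6 = 0 := rfl
@[simp] lemma N8e_4_7 (b : ℝ) : N8 b 4 7 = ((Real.sqrt (1-b^2)/2 : ℝ) : ℂ) := rfl
@[simp] lemma N8e_5_0 (b : ℝ) : N8 b 5 0 = 0 := rfl
@[simp] lemma N8e_5_1 (b : ℝ) : N8 b 5 1 = 0 := rfl
@[simp] lemma N8e_5_2 (b : ℝ) : N8 b 5 2 = (b:ℂ) := rfl
@[simp] lemma N8e_5_3 (b : ℝ) : N8 b 5 3 = 0 := rfl
@[simp] lemma N8e_5_4 (b : ℝ) : N8 b 5 4 = 0 := rfl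
@[simp] lemma N8e_5_5 (b : ℝ) : N8 b 5 5 = (b:ℂ) := rfl
@[simp] lemma N8e_5_6 (b : ℝ) : N8 b 5 6 = 0 := rfl
@[simp] lemma N8e_5_7 (b : ℝ) : N8 b 5 7 = 0 := rfl
@[simp] lemma N8e_6_0 (b : ℝ) : N8 b 6 0 = 0 := rfl
@[simp] lemma N8e_6_1 (b : ℝ) : N8 b 6 1 = 0 := rfl
@[simp] lemma N8e_6_2 (b : ℝ) : N8 b 6 2 = 0 := rfl
@[simp] lemma N8e_6_3 (b : ℝ) : N8 b 6 3 = (b:ℂ) := rfl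
@[simp] lemma N8e_6_4 (b : ℝ) : N8 b 6 4 = 0 := rfl
@[simp] lemma N8e_6_5 (b : ℝ) : N8 b 6 5 = 0 := rfl
@[simp] lemma N8e_6_6 (b : ℝ) : N8 b 6 6 = (b:ℂ) := rfl
@[simp] lemma N8e_6_7 (b : ℝ) : N8 b 6 7 = 0 := rfl
@[simp] lemma N8e_7_0 (b : ℝ) : N8 b 7 0 = 0 := rfl
@[simp] lemma N8e_7_1 (b : ℝ) : N8 b 7 1 = 0 := rfl
@[simp] lemma N8e_7_2 (b : ℝ) : N8 b 7 2 = 0 := rfl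
@[simp] lemma N8e_7_3 (b : ℝ) : N8 b 7 3 = 0 := rfl
@[simp] lemma N8e_7_4 (b : ℝ) : N8 b 7 4 = ((Real.sqrt (1-b^2)/2 : ℝ) : ℂ) := rfl
@[simp] lemma N8e_7_5 (b : ℝ) : N8 b 7 5 = 0 := rfl
@[simp] lemma N8e_7_6 (b : ℝ) : N8 b 7 6 = 0 := rfl
@[simp] lemma N8e_7_7 (b : ℝ) : N8 b 7 7 = (((1+b)/2 : ℝ) : ℂ) := rfl


@[simp] lemma fmk0 (h : 0 < 8) : (⟨0, h⟩ : Fin 8) = (0 : Fin 8) := rfl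
@[simp] lemma fmk1 (h : 1 < 8) : (⟨1, h⟩ : Fin 8) = (1 : Fin 8) := rfl
@[simp] lemma fmk2 (h : 2 < 8) : (⟨2, h⟩ : Fin 8) = (2 : Fin 8) := rfl
@[simp] lemma fmk3 (h : 3 < 8) : (⟨3, h⟩ : Fin 8) = (3 : Fin 8) := rfl
@[simp] lemma fmk4 (h : 4 < 8) : (⟨4, h⟩ : Fin 8) = (4 : Fin 8) := rfl
@[simp] lemma fmk5 (h : 5 < 8) : (⟨5, h⟩ : Fin 8) = (5 : Fin 8) := rfl
@[simp] lemma fmk6 (h : 6 < 8) : (⟨6, h⟩ : Fin 8) = (6 : Fin 8) := rfl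
@[simp] lemma fmk7 (h : 7 < 8) : (⟨7, h⟩ : Fin 8) = (7 : Fin 8) := rfl

lemma key8 (b : ℝ) (hb0 : 0 ≤ b) (hb1 : b ≤ 1) : (B8 b)ᴴ * B8 b = N8 b := by
  have hm : 0 ≤ (1-b)/2 := by linarith
  have hp : 0 ≤ (1+b)/2 := by linarith
  have h1 : Real.sqrt b * Real.sqrt b = b := Real.mul_self_sqrt hb0
  have h2 : Real.sqrt ((1-b)/2) * Real.sqrt ((1-b)/2) = (1-b)/2 := Real.mul_self_sqrt hm
  have h3 : Real.sqrt ((1+b)/2) * Real.sqrt ((1+b)/2) = (1+b)/2 := Real.mul_self_sqrt hp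
  have h4 : Real.sqrt ((1-b)/2) * Real.sqrt ((1+b)/2) = Real.sqrt (1-b^2)/2 := by
    rw [← Real.sqrt_mul hm, show (1-b)/2 * ((1+b)/2) = (1-b^2) * (1/2)^2 by ring,
      Real.sqrt_mul (by nlinarith), Real.sqrt_sq (by norm_num)]
    ring
  ext i j
  fin_cases i <;> fin_cases j <;>
    simp only [Matrix.mul_apply, Matrix.conjTranspose_apply, Fin.sum_univ_eight,
      fmk0, fmk1, fmk2, fmk3, fmk4, fmk5, fmk6, fmk7,
      B8e_0_0, B8e_0_1, B8e_0_2, B8e_0_3, B8e_0_4, B8e_0_5, B8e_0_6, B8e_0_7,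
      B8e_1_0, B8e_1_1, B8e_1_2, B8e_1_3, B8e_1_4, B8e_1_5, B8e_1_6, B8e_1_7,
      B8e_2_0, B8e_2_1, B8e_2_2, B8e_2_3, B8e_2_4, B8e_2_5, B8e_2_6, B8e_2_7,
      B8e_3_0, B8e_3_1, B8e_3_2, B8e_3_3, B8e_3_4, B8e_3_5, B8e_3_6, B8e_3_7,
      B8e_4_0, B8e_4_1, B8e_4_2, B8e_4_3, B8e_4_4, B8e_4_5, B8e_4_6, B8e_4_7,
      B8e_5_0, B8e_5_1, B8e_5_2, B8e_5_3, B8e_5_4, B8e_5_5, B8e_5_6, B8e_5_7,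
      B8e_6_0, B8e_6_1, B8e_6_2, B8e_6_3, B8e_6_4, B8e_6_5, B8e_6_6, B8e_6_7,
      B8e_7_0, B8e_7_1, B8e_7_2, B8e_7_3, B8e_7_4, B8e_7_5, B8e_7_6, B8e_7_7,
      N8e_0_0, N8e_0_1, N8e_0_2, N8e_0_3, N8e_0_4, N8e_0_5, N8e_0_6, N8e_0_7,
      N8e_1_0, N8e_1_1, N8e_1_2, N8e_1_3, N8e_1_4, N8e_1_5, N8e_1_6, N8e_1_7,
      N8e_2_0, N8e_2_1, N8e_2_2, N8e_2_3, N8e_2_4, N8e_2_5, N8e_2_6, N8e_2_7,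
      N8e_3_0, N8e_3_1, N8e_3_2, N8e_3_3, N8e_3_4, N8e_3_5, N8e_3_6, N8e_3_7,
      N8e_4_0, N8e_4_1, N8e_4_2, N8e_4_3, N8e_4_4, N8e_4_5, N8e_4_6, N8e_4_7,
      N8e_5_0, N8e_5_1, N8e_5_2, N8e_5_3, N8e_5_4, N8e_5_5, N8e_5_6, N8e_5_7,
      N8e_6_0, N8e_6_1, N8e_6_2, N8e_6_3, N8e_6_4, N8e_6_5, N8e_6_6, N8e_6_7,
      N8e_7_0, N8e_7_1, N8e_7_2, N8e_7_3, N8e_7_4, N8e_7_5, N8e_7_6, N8e_7_7,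
      star_zero, map_zero, mul_zero, zero_mul, add_zero, zero_add,
      Complex.star_def, Complex.conj_ofReal] <;>
    norm_cast
  all_goals linarith [h1, h2, h3, h4]

noncomputable def Bq (b : ℝ) : Matrix (Fin 8) Q3 ℂ :=
  Matrix.of fun i x => B8 b i (enc x)

@[simp] lemma Me_0_0 (b : ℝ) : Mmat b 0 0 = (b:ℂ) := rfl
@[simp] lemma Me_0_1 (b : ℝ) : Mmat b 0 1 = 0 := rfl
@[simp] lemma Me_0_2 (b : ℝ) : Mmat b 0 2 = 0 := rfl
@[simp] lemma Me_0_3 (b : ℝ) : Mmat b 0 3 = 0 := rfl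
@[simp] lemma Me_0_4 (b : ℝ) : Mmat b 0 4 = 0 := rfl
@[simp] lemma Me_0_5 (b : ℝ) : Mmat b 0 5 = (b:ℂ) := rfl
@[simp] lemma Me_0_6 (b : ℝ) : Mmat b 0 6 = 0 := rfl
@[simp] lemma Me_0_7 (b : ℝ) : Mmat b 0 7 = 0 := rfl
@[simp] lemma Me_1_0 (b : ℝ) : Mmat b 1 0 = 0 := rfl
@[simp] lemma Me_1_1 (b : ℝ) : Mmat b 1 1 = (b:ℂ) := rfl
@[simp] lemma Me_1_2 (b : ℝ) : Mmat b 1 2 = 0 := rfl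
@[simp] lemma Me_1_3 (b : ℝ) : Mmat b 1 3 = 0 := rfl
@[simp] lemma Me_1_4 (b : ℝ) : Mmat b 1 4 = 0 := rfl
@[simp] lemma Me_1_5 (b : ℝ) : Mmat b 1 5 = 0 := rfl
@[simp] lemma Me_1_6 (b : ℝ) : Mmat b 1 6 = (b:ℂ) := rfl
@[simp] lemma Me_1_7 (b : ℝ) : Mmat b 1 7 = 0 := rfl
@[simp] lemma Me_2_0 (b : ℝ) : Mmat b 2 0 = 0 := rfl
@[simp] lemma Me_2_1 (b : ℝ) : Mmat b 2 1 = 0 := rfl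
@[simp] lemma Me_2_2 (b : ℝ) : Mmat b 2 2 = (b:ℂ) := rfl
@[simp] lemma Me_2_3 (b : ℝ) : Mmat b 2 3 = 0 := rfl
@[simp] lemma Me_2_4 (b : ℝ) : Mmat b 2 4 = 0 := rfl
@[simp] lemma Me_2_5 (b : ℝ) : Mmat b 2 5 = 0 := rfl
@[simp] lemma Me_2_6 (b : ℝ) : Mmat b 2 6 = 0 := rfl
@[simp] lemma Me_2_7 (b : ℝ) : Mmat b 2 7 = (b:ℂ) := rfl
@[simp] lemma Me_3_0 (b : ℝ) : Mmat b 3 0 = 0 := rfl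
@[simp] lemma Me_3_1 (b : ℝ) : Mmat b 3 1 = 0 := rfl
@[simp] lemma Me_3_2 (b : ℝ) : Mmat b 3 2 = 0 := rfl
@[simp] lemma Me_3_3 (b : ℝ) : Mmat b 3 3 = (b:ℂ) := rfl
@[simp] lemma Me_3_4 (b : ℝ) : Mmat b 3 4 = 0 := rfl
@[simp] lemma Me_3_5 (b : ℝ) : Mmat b 3 5 = 0 := rfl
@[simp] lemma Me_3_6 (b : ℝ) : Mmat b 3 6 = 0 := rfl
@[simp] lemma Me_3_7 (b : ℝ) : Mmat b 3 7 = 0 := rfl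
@[simp] lemma Me_4_0 (b : ℝ) : Mmat b 4 0 = 0 := rfl
@[simp] lemma Me_4_1 (b : ℝ) : Mmat b 4 1 = 0 := rfl
@[simp] lemma Me_4_2 (b : ℝ) : Mmat b 4 2 = 0 := rfl
@[simp] lemma Me_4_3 (b : ℝ) : Mmat b 4 3 = 0 := rfl
@[simp] lemma Me_4_4 (b : ℝ) : Mmat b 4 4 = (((1+b)/2 : ℝ) : ℂ) := rfl
@[simp] lemma Me_4_5 (b : ℝ) : Mmat b 4 5 = 0 := rfl
@[simp] lemma Me_4_6 (b : ℝ) : Mmat b 4 6 = 0 := rfl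
@[simp] lemma Me_4_7 (b : ℝ) : Mmat b 4 7 = ((Real.sqrt (1-b^2)/2 : ℝ) : ℂ) := rfl
@[simp] lemma Me_5_0 (b : ℝ) : Mmat b 5 0 = (b:ℂ) := rfl
@[simp] lemma Me_5_1 (b : ℝ) : Mmat b 5 1 = 0 := rfl
@[simp] lemma Me_5_2 (b : ℝ) : Mmat b 5 2 = 0 := rfl
@[simp] lemma Me_5_3 (b : ℝ) : Mmat b 5 3 = 0 := rfl
@[simp] lemma Me_5_4 (b : ℝ) : Mmat b 5 4 = 0 := rfl
@[simp] lemma Me_5_5 (b : ℝ) : Mmat b 5 5 = (b:ℂ) := rfl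
@[simp] lemma Me_5_6 (b : ℝ) : Mmat b 5 6 = 0 := rfl
@[simp] lemma Me_5_7 (b : ℝ) : Mmat b 5 7 = 0 := rfl
@[simp] lemma Me_6_0 (b : ℝ) : Mmat b 6 0 = 0 := rfl
@[simp] lemma Me_6_1 (b : ℝ) : Mmat b 6 1 = (b:ℂ) := rfl
@[simp] lemma Me_6_2 (b : ℝ) : Mmat b 6 2 = 0 := rfl
@[simp] lemma Me_6_3 (b : ℝ) : Mmat b 6 3 = 0 := rfl
@[simp] lemma Me_6_4 (b : ℝ) : Mmat b 6 4 = 0 := rfl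
@[simp] lemma Me_6_5 (b : ℝ) : Mmat b 6 5 = 0 := rfl
@[simp] lemma Me_6_6 (b : ℝ) : Mmat b 6 6 = (b:ℂ) := rfl
@[simp] lemma Me_6_7 (b : ℝ) : Mmat b 6 7 = 0 := rfl
@[simp] lemma Me_7_0 (b : ℝ) : Mmat b 7 0 = 0 := rfl
@[simp] lemma Me_7_1 (b : ℝ) : Mmat b 7 1 = 0 := rfl
@[simp] lemma Me_7_2 (b : ℝ) : Mmat b 7 2 = (b:ℂ) := rfl
@[simp] lemma Me_7_3 (b : ℝ) : Mmat b 7 3 = 0 := rfl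
@[simp] lemma Me_7_4 (b : ℝ) : Mmat b 7 4 = ((Real.sqrt (1-b^2)/2 : ℝ) : ℂ) := rfl
@[simp] lemma Me_7_5 (b : ℝ) : Mmat b 7 5 = 0 := rfl
@[simp] lemma Me_7_6 (b : ℝ) : Mmat b 7 6 = 0 := rfl
@[simp] lemma Me_7_7 (b : ℝ) : Mmat b 7 7 = (((1+b)/2 : ℝ) : ℂ) := rfl
@[simp] lemma ence_0_0_0 : enc (0,0,0) = (0 : Fin 8) := rfl
@[simp] lemma ence_0_0_1 : enc (0,0,1) = (1 : Fin 8) := rfl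
@[simp] lemma ence_0_1_0 : enc (0,1,0) = (2 : Fin 8) := rfl
@[simp] lemma ence_0_1_1 : enc (0,1,1) = (3 : Fin 8) := rfl
@[simp] lemma ence_1_0_0 : enc (1,0,0) = (4 : Fin 8) := rfl
@[simp] lemma ence_1_0_1 : enc (1,0,1) = (5 : Fin 8) := rfl
@[simp] lemma ence_1_1_0 : enc (1,1,0) = (6 : Fin 8) := rfl
@[simp] lemma ence_1_1_1 : enc (1,1,1) = (7 : Fin 8) := rfl

lemma ptA_sigma_eq (b : ℝ) (hb0 : 0 ≤ b) (hb1 : b ≤ 1) :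
    ptA (sigma b) = (((7*b+1 : ℝ) : ℂ))⁻¹ • ((Bq b)ᴴ * Bq b) := by
  have key := key8 b hb0 hb1
  have hM : ∀ x y : Q3, Mmat b (enc (y.1, x.2)) (enc (x.1, y.2)) = N8 b (enc x) (enc y) := by
    simp only [Prod.forall, Fin.forall_fin_two, ence_0_0_0, ence_0_0_1, ence_0_1_0, ence_0_1_1, ence_1_0_0, ence_1_0_1, ence_1_1_0, ence_1_1_1,
      Me_0_0, Me_0_1, Me_0_2, Me_0_3, Me_0_4, Me_0_5, Me_0_6, Me_0_7, Me_1_0, Me_1_1, Me_1_2, Me_1_3, Me_1_4, Me_1_5, Me_1_6, Me_1_7, Me_2_0, Me_2_1, Me_2_2, Me_2_3, Me_2_4, Me_2_5, Me_2_6, Me_2_7, Me_3_0, Me_3_1, Me_3_2, Me_3_3, Me_3_4, Me_3_5, Me_3_6, Me_3_7, Me_4_0, Me_4_1, Me_4_2, Me_4_3, Me_4_4, Me_4_5, Me_4_6, Me_4_7, Me_5_0, Me_5_1, Me_5_2, Me_5_3, Me_5_4, Me_5_5, Me_5_6, Me_5_7, Me_6_0, Me_6_1, Me_6_2, Me_6_3,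 Me_6_4, Me_6_5, Me_6_6, Me_6_7, Me_7_0, Me_7_1, Me_7_2, Me_7_3, Me_7_4, Me_7_5, Me_7_6, Me_7_7,
      N8e_0_0, N8e_0_1, N8e_0_2, N8e_0_3, N8e_0_4, N8e_0_5, N8e_0_6, N8e_0_7, N8e_1_0, N8e_1_1, N8e_1_2, N8e_1_3, N8e_1_4, N8e_1_5, N8e_1_6, N8e_1_7, N8e_2_0, N8e_2_1, N8e_2_2, N8e_2_3, N8e_2_4, N8e_2_5, N8e_2_6, N8e_2_7, N8e_3_0, N8e_3_1, N8e_3_2, N8e_3_3, N8e_3_4, N8e_3_5, N8e_3_6, N8e_3_7, N8e_4_0, N8e_4_1, N8e_4_2, N8e_4_3, N8e_4_4, N8e_4_5, N8e_4_6, N8e_4_7, N8e_5_0, N8e_5_1, N8e_5_2, N8e_5_3, N8e_5_4, N8e_5_5, N8e_5_6, N8e_5_7, N8e_6_0, N8e_6_1, N8e_6_2, N8e_6_3, N8e_6_4, N8e_6_5, N8e_6_6, N8e_6_7, N8e_7_0, N8e_7_1, N8e_7_2, N8e_7_3, N8e_7_4, N8e_7_5, N8e_7_6, N8e_7_7]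
    norm_num
  ext x y
  have hBq : ((Bq b)ᴴ * Bq b) x y = ((B8 b)ᴴ * B8 b) (enc x) (enc y) := by
    simp [Matrix.mul_apply, Matrix.conjTranspose_apply, Bq]
  show sigma b (y.1, x.2) (x.1, y.2) = (((7*b+1 : ℝ) : ℂ))⁻¹ * ((Bq b)ᴴ * Bq b) x y
  rw [hBq, key]
  show (((7*b+1 : ℝ) : ℂ))⁻¹ * Mmat b (enc (y.1, x.2)) (enc (x.1, y.2))
      = (((7*b+1 : ℝ) : ℂ))⁻¹ * N8 b (enc x) (enc y)
  rw [hM x y]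

lemma smul_psd (r : ℝ) (hr : 0 ≤ r) (M : Matrix Q3 Q3 ℂ) (hM : M.PosSemidef) :
    (((r:ℝ):ℂ) • M).PosSemidef := by
  constructor
  · unfold Matrix.IsHermitian
    rw [Matrix.conjTranspose_smul, hM.1.eq]
    congr 1
    simp [Complex.conj_ofReal]
  · intro x
    have h := hM.2 x
    exact (hM.smul (Complex.zero_le_real.mpr hr)).2 x

theorem sigma_ppt_A (b : ℝ) (hb0 : 0 ≤ b) (hb1 : b ≤ 1) :
    (ptA (sigma b)).PosSemidef := by
  rw [ptA_sigma_eq b hb0 hb1]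
  have h1 : (((7*b+1 : ℝ) : ℂ))⁻¹ = (((7*b+1 : ℝ)⁻¹ : ℝ) : ℂ) := by push_cast; ring
  rw [h1]
  exact smul_psd _ (by positivity) _ (Matrix.posSemidef_conjTranspose_mul_self (Bq b))
end
end

section
/- For b ∈ (0,1), the Horodecki state σ^(b) is NPT across the bipartition B|CA: its partial transpose with respect to the second qubit has a negative eigenvalue. -/
noncomputable section

open scoped BigOperators ComplexOrder

/-- witness vector for negativity of the partial transpose -/
noncomputable def wvec (b : ℝ) : Q3 → ℂ := fun x =>
  ![ ![![(1:ℂ),0], ![0,0]],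
     ![![0,(-1:ℂ)], ![((Real.sqrt (1-b^2)/(2*b) : ℝ) : ℂ), 0]] ] x.1 x.2.1 x.2.2

theorem sigma_npt_B (b : ℝ) (hb0 : 0 < b) (hb1 : b < 1) :
    ¬ (ptB (sigma b)).PosSemidef := by
  intro h
  have h2 := h.dotProduct_mulVec_nonneg (wvec b)
  have hs2 : Real.sqrt (1-b^2) ^ 2 = 1 - b^2 :=
    Real.sq_sqrt (by nlinarith)
  have hb0' : (b:ℂ) ≠ 0 := by exact_mod_cast hb0.ne'
  have h7pos : (0:ℝ) < 7*b+1 := by linarith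
  have h7 : ((7*b+1:ℝ):ℂ) ≠ 0 := by exact_mod_cast h7pos.ne'
  have p00 : ptB (sigma b) (0,0,0) (0,0,0) = ((7*b+1:ℝ):ℂ)⁻¹ * (b:ℂ) := rfl
  have p05 : ptB (sigma b) (0,0,0) (1,0,1) = ((7*b+1:ℝ):ℂ)⁻¹ * (b:ℂ) := rfl
  have p06 : ptB (sigma b) (0,0,0) (1,1,0) = ((7*b+1:ℝ):ℂ)⁻¹ * 0 := rfl
  have p50 : ptB (sigma b) (1,0,1) (0,0,0) = ((7*b+1:ℝ):ℂ)⁻¹ * (b:ℂ) := rfl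
  have p55 : ptB (sigma b) (1,0,1) (1,0,1) = ((7*b+1:ℝ):ℂ)⁻¹ * (b:ℂ) := rfl
  have p56 : ptB (sigma b) (1,0,1) (1,1,0)
      = ((7*b+1:ℝ):ℂ)⁻¹ * ((Real.sqrt (1-b^2)/2 : ℝ) : ℂ) := rfl
  have p60 : ptB (sigma b) (1,1,0) (0,0,0) = ((7*b+1:ℝ):ℂ)⁻¹ * 0 := rfl
  have p65 : ptB (sigma b) (1,1,0) (1,0,1)
      = ((7*b+1:ℝ):ℂ)⁻¹ * ((Real.sqrt (1-b^2)/2 : ℝ) : ℂ) := rfl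
  have key : dotProduct (star (wvec b)) ((ptB (sigma b)).mulVec (wvec b))
      = (((7*b+1)⁻¹ * (-(1-b^2)/(4*b)) : ℝ) : ℂ) := by
    have p66 : ptB (sigma b) (1,1,0) (1,1,0) = ((7*b+1:ℝ):ℂ)⁻¹ * (b:ℂ) := rfl
    simp only [dotProduct, Matrix.mulVec, Fintype.sum_prod_type,
      Fin.sum_univ_two, Pi.star_apply, RCLike.star_def]
    simp only [wvec, Matrix.cons_val_zero, Matrix.cons_val_one, Matrix.head_cons,
      map_one, map_neg, Complex.conj_ofReal, map_zero, mul_zero, zero_mul,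
      mul_one, one_mul, add_zero, zero_add, mul_neg, neg_mul]
    rw [p00, p05, p06, p50, p55, p56, p60, p65, p66]
    push_cast
    have hS : ((Real.sqrt (1-b^2):ℝ):ℂ)^2 = 1 - (b:ℂ)^2 := by
      rw [← Complex.ofReal_pow, hs2]; push_cast; ring
    field_simp
    ring_nf
    simp only [hS]
    ring
  rw [key] at h2
  have hre : (0:ℝ) ≤ (7*b+1)⁻¹ * (-(1-b^2)/(4*b)) := by
    rwa [show ((0:ℂ)) = ((0:ℝ):ℂ) from rfl, Complex.real_le_real] at h2
  have h7i : (0:ℝ) < (7*b+1)⁻¹ := by positivity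
  have hneg : (7*b+1)⁻¹ * (-(1-b^2)/(4*b)) < 0 :=
    mul_neg_of_pos_of_neg h7i
      (div_neg_of_neg_of_pos (by nlinarith) (by linarith))
  linarith
end
end

section
/- For b ∈ [0,1], the matrix ρ^[2](b) = (3+21b)/(3+17b) · h^(b) is positive semidefinite with trace 1, where h^(b) = η^(b) − μ(v₁v₁ᵀ+v₂v₂ᵀ) + ν(v₃v₄ᵀ+v₄v₃ᵀ) + ε(v₅v₆ᵀ+v₆v₅ᵀ). -/
noncomputable section

open scoped BigOperators ComplexOrder

/-- standard basis vector e_{n+1} of ℂ⁸ viewed on the 3-qubit index set -/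
def stdv (n : Fin 8) : Q3 → ℂ := fun x => if enc x = n then 1 else 0

/-- the operator h^(b) -/
noncomputable def hOp (b : ℝ) : Matrix Q3 Q3 ℂ :=
  etaState b
    - ((b / (3*(1+7*b)) : ℝ) : ℂ) •
        (Matrix.vecMulVec (stdv 1 + stdv 6) (stdv 1 + stdv 6)
          + Matrix.vecMulVec (stdv 2 + stdv 5) (stdv 2 + stdv 5))
    + (((1+3*b) / (6+42*b) : ℝ) : ℂ) •
        (Matrix.vecMulVec (stdv 1) (stdv 2) + Matrix.vecMulVec (stdv 2) (stdv 1))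
    + ((2*b / (3*(1+7*b)) : ℝ) : ℂ) •
        (Matrix.vecMulVec (stdv 6) (stdv 5) + Matrix.vecMulVec (stdv 5) (stdv 6))

/-- the state ρ^[2](b) -/
noncomputable def rho2 (b : ℝ) : Matrix Q3 Q3 ℂ :=
  (((3+21*b) / (3+17*b) : ℝ) : ℂ) • hOp b


/-! ### Auxiliary machinery -/

noncomputable def Mfun (b : ℝ) (i j : ℕ) : ℂ :=
  if (i = 4 ∧ j = 4) ∨ (i = 7 ∧ j = 7) then (((1+b)/2 : ℝ) : ℂ)
  else if (i = 4 ∧ j = 7) ∨ (i = 7 ∧ j = 4) then ((Real.sqrt (1-b^2)/2 : ℝ) : ℂ)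
  else if (i = j ∧ i ≤ 3) ∨ (i = 5 ∧ j = 5) ∨ (i = 6 ∧ j = 6) ∨ (i = 0 ∧ j = 5)
      ∨ (i = 5 ∧ j = 0) ∨ (i = 1 ∧ j = 6) ∨ (i = 6 ∧ j = 1) ∨ (i = 2 ∧ j = 7)
      ∨ (i = 7 ∧ j = 2) then (b:ℂ)
  else 0

lemma Mmat_apply (b : ℝ) (i j : Fin 8) : Mmat b i j = Mfun b i.val j.val := by
  fin_cases i <;> fin_cases j <;> rfl

lemma fv0 : ((0 : Fin 8) : ℕ) = 0 := rfl
lemma fv1 : ((1 : Fin 8) : ℕ) = 1 := rfl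
lemma fv2 : ((2 : Fin 8) : ℕ) = 2 := rfl
lemma fv3 : ((3 : Fin 8) : ℕ) = 3 := rfl
lemma fv4 : ((4 : Fin 8) : ℕ) = 4 := rfl
lemma fv5 : ((5 : Fin 8) : ℕ) = 5 := rfl
lemma fv6 : ((6 : Fin 8) : ℕ) = 6 := rfl
lemma fv7 : ((7 : Fin 8) : ℕ) = 7 := rfl

def sel (p : ℕ → Prop) [DecidablePred p] : Q3 → ℂ := fun x => if p (enc x).val then 1 else 0

noncomputable def wA (b : ℝ) : Q3 → ℂ := fun x =>
  if (enc x).val = 4 then (((1+3*b)/2 : ℝ) : ℂ)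
  else if (enc x).val = 7 then (((2*b+Real.sqrt (1-b^2))/2 : ℝ) : ℂ) else 0

noncomputable def wB (b : ℝ) : Q3 → ℂ := fun x =>
  if (enc x).val = 1 ∨ (enc x).val = 2 then (((1+3*b)/2 : ℝ) : ℂ)
  else if (enc x).val = 7 then (((2*b+Real.sqrt (1-b^2))/2 : ℝ) : ℂ) else 0

noncomputable def sosSum (b : ℝ) : Matrix Q3 Q3 ℂ :=
  (b:ℂ) • Matrix.vecMulVec (sel (fun n => n = 0 ∨ n = 3)) (sel (fun n => n = 0 ∨ n = 3))
  + (b:ℂ) • Matrix.vecMulVec (sel (fun n => n = 0 ∨ n = 5 ∨ n = 6)) (sel (fun n => n = 0 ∨ n = 5 ∨ n = 6))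
  + (b:ℂ) • Matrix.vecMulVec (sel (fun n => n = 3 ∨ n = 4)) (sel (fun n => n = 3 ∨ n = 4))
  + (b:ℂ) • Matrix.vecMulVec (sel (fun n => n = 0)) (sel (fun n => n = 0))
  + (b:ℂ) • Matrix.vecMulVec (sel (fun n => n = 3)) (sel (fun n => n = 3))
  + (b:ℂ) • Matrix.vecMulVec (sel (fun n => n = 5 ∨ n = 6)) (sel (fun n => n = 5 ∨ n = 6))
  + ((2/(1+3*b) : ℝ) : ℂ) • Matrix.vecMulVec (wA b) (wA b)
  + ((2/(1+3*b) : ℝ) : ℂ) • Matrix.vecMulVec (wB b) (wB b)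
  + (((3+3*b)/2 - (2*b+Real.sqrt (1-b^2))^2/(1+3*b) : ℝ) : ℂ) •
      Matrix.vecMulVec (sel (fun n => n = 7)) (sel (fun n => n = 7))

lemma outer_psd (c : ℝ) (hc : 0 ≤ c) (v : Q3 → ℂ) (hv : star v = v) :
    ((c:ℂ) • Matrix.vecMulVec v v).PosSemidef := by
  refine Matrix.PosSemidef.of_dotProduct_mulVec_nonneg ?_ ?_
  · ext i j
    simp only [Matrix.conjTranspose_apply, Matrix.smul_apply, Matrix.vecMulVec_apply,
      smul_eq_mul, star_mul', Complex.star_def, map_mul]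
    have hvi : (starRingEnd ℂ) (v i) = v i := congrFun hv i
    have hvj : (starRingEnd ℂ) (v j) = v j := congrFun hv j
    rw [Complex.conj_ofReal, hvi, hvj]; ring
  · intro x
    set z : ℂ := dotProduct v x with hz
    have h1 : Matrix.mulVec ((c:ℂ) • Matrix.vecMulVec v v) x = fun i => (c:ℂ) * (z * v i) := by
      funext i
      simp only [Matrix.mulVec, Matrix.smul_apply, Matrix.vecMulVec_apply,
        dotProduct, smul_eq_mul, hz, Finset.sum_mul, Finset.mul_sum]
      exact Finset.sum_congr rfl fun j _ => by ring
    rw [h1]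
    have h2 : dotProduct (star x) (fun i => (c:ℂ) * (z * v i)) = (c:ℂ) * (z * star z) := by
      simp only [dotProduct, Pi.star_apply, hz, star_sum, star_mul', Finset.mul_sum]
      exact Finset.sum_congr rfl fun i _ => by
        rw [show star (v i) = v i from congrFun hv i]; ring
    rw [h2]
    exact mul_nonneg (Complex.zero_le_real.mpr hc) (mul_star_self_nonneg z)

lemma psd_realsmul (r : ℝ) (hr : 0 ≤ r) {M : Matrix Q3 Q3 ℂ} (hM : M.PosSemidef) :
    ((r:ℂ) • M).PosSemidef := by
  refine Matrix.PosSemidef.of_dotProduct_mulVec_nonneg ?_ ?_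
  · show Matrix.conjTranspose ((r:ℂ) • M) = (r:ℂ) • M
    rw [Matrix.conjTranspose_smul, hM.1]
    congr 1
    simp [Complex.star_def, Complex.conj_ofReal]
  · intro x
    rw [Matrix.smul_mulVec, dotProduct_smul]
    have := hM.dotProduct_mulVec_nonneg x
    calc (0:ℂ) ≤ (r:ℂ) * dotProduct (star x) (Matrix.mulVec M x) :=
          mul_nonneg (Complex.zero_le_real.mpr hr) this
    _ = _ := by simp [smul_eq_mul]

lemma star_sel (p : ℕ → Prop) [DecidablePred p] : star (sel p) = sel p := by
  funext x
  by_cases h : p (enc x).val <;> simp [sel, h]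

lemma star_wA (b : ℝ) : star (wA b) = wA b := by
  funext x
  by_cases h : (enc x).val = 4 <;> by_cases h' : (enc x).val = 7 <;>
    simp [wA, h, h', Complex.star_def, Complex.conj_ofReal]

lemma star_wB (b : ℝ) : star (wB b) = wB b := by
  funext x
  by_cases h : (enc x).val = 1 ∨ (enc x).val = 2 <;> by_cases h' : (enc x).val = 7 <;>
    simp [wB, h, h', Complex.star_def, Complex.conj_ofReal]

lemma sosSum_psd (b : ℝ) (hb0 : 0 ≤ b) (hb1 : b ≤ 1) : (sosSum b).PosSemidef := by
  have hs0 : 0 ≤ Real.sqrt (1-b^2) := Real.sqrt_nonneg _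
  have hsq : Real.sqrt (1-b^2)^2 = 1-b^2 := Real.sq_sqrt (by nlinarith)
  have hs1 : Real.sqrt (1-b^2) ≤ 1 := by nlinarith
  have hc1 : (0:ℝ) ≤ 2/(1+3*b) := by positivity
  have hc2 : (0:ℝ) ≤ (3+3*b)/2 - (2*b+Real.sqrt (1-b^2))^2/(1+3*b) := by
    have hpos : (0:ℝ) < 1+3*b := by linarith
    have : (2*b+Real.sqrt (1-b^2))^2/(1+3*b) ≤ (3+3*b)/2 := by
      rw [div_le_iff₀ hpos]
      nlinarith
    linarith
  exact ((((((((outer_psd b hb0 _ (star_sel _)).add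
    (outer_psd b hb0 _ (star_sel _))).add
    (outer_psd b hb0 _ (star_sel _))).add
    (outer_psd b hb0 _ (star_sel _))).add
    (outer_psd b hb0 _ (star_sel _))).add
    (outer_psd b hb0 _ (star_sel _))).add
    (outer_psd _ hc1 _ (star_wA b))).add
    (outer_psd _ hc1 _ (star_wB b))).add
    (outer_psd _ hc2 _ (star_sel _))

set_option maxHeartbeats 4000000 in
lemma key (b : ℝ) (hb0 : 0 ≤ b) :
    sosSum b = ((3*(1+7*b) : ℝ) : ℂ) • hOp b := by
  have h7 : ((1:ℂ) + 7*(b:ℝ)) ≠ 0 := by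
    have h : (0:ℝ) < 1 + 7*b := by linarith
    simpa using (Complex.ofReal_ne_zero.mpr (ne_of_gt h))
  have h3b : ((1:ℂ) + 3*(b:ℝ)) ≠ 0 := by
    have h : (0:ℝ) < 1 + 3*b := by linarith
    simpa using (Complex.ofReal_ne_zero.mpr (ne_of_gt h))
  ext ⟨x1, x2, x3⟩ ⟨y1, y2, y3⟩
  fin_cases x1 <;> fin_cases x2 <;> fin_cases x3 <;>
    fin_cases y1 <;> fin_cases y2 <;> fin_cases y3 <;>
  · simp only [sosSum, hOp, etaState, sigma, cyc, sigma8, Matrix.of_apply,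
      Matrix.add_apply, Matrix.sub_apply, Matrix.smul_apply, Mmat_apply, Mfun, sel, wA, wB,
      stdv, enc, Matrix.vecMulVec_apply, Pi.add_apply, smul_eq_mul]
    norm_num [Fin.ext_iff, fv0, fv1, fv2, fv3, fv4, fv5, fv6, fv7]
    try (field_simp; ring)
    try (refine Or.inr ?_; field_simp; ring)
    try exact Or.inr trivial

set_option maxHeartbeats 2000000 in
theorem rho2_is_density
 (b : ℝ) (hb0 : 0 ≤ b) (hb1 : b ≤ 1) :
    (rho2 b).PosSemidef ∧ (rho2 b).trace = 1 := by
  have hkey := key b hb0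
  have h17 : (0:ℝ) < 3+17*b := by linarith
  have h7 : (0:ℝ) < 3*(1+7*b) := by linarith
  have hrho : rho2 b = ((((3+21*b) / (3+17*b) / (3*(1+7*b)) : ℝ)) : ℂ) • sosSum b := by
    rw [hkey, rho2, smul_smul]
    congr 1
    push_cast
    field_simp
  constructor
  · rw [hrho]
    exact psd_realsmul _ (by positivity) (sosSum_psd b hb0 hb1)
  · have hc7 : ((1:ℂ) + 7*(b:ℝ)) ≠ 0 := by
      simpa using (Complex.ofReal_ne_zero.mpr (ne_of_gt (by linarith : (0:ℝ) < 1+7*b)))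
    have hc17 : ((3:ℂ) + 17*(b:ℝ)) ≠ 0 := by
      simpa using (Complex.ofReal_ne_zero.mpr (ne_of_gt h17))
    rw [Matrix.trace]
    simp only [Matrix.diag, Fintype.sum_prod_type, Fin.sum_univ_two]
    simp only [rho2, hOp, etaState, sigma, cyc, sigma8, Matrix.of_apply,
      Matrix.add_apply, Matrix.sub_apply, Matrix.smul_apply, Mmat_apply, Mfun, sel, wA, wB,
      stdv, enc, Matrix.vecMulVec_apply, Pi.add_apply, smul_eq_mul]
    norm_num [Fin.ext_iff, fv0, fv1, fv2, fv3, fv4, fv5, fv6, fv7]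
    field_simp
    ring
end
end
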